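/- Let G^{A,B} be a biconed graph and T a spanning tree of G^{A,B} that does not contain the edge 00̄. If some component of T ∖ T_0 contains two connecting vertices a ∈ A and b ∈ Ā, then both connecting edges 0a and 0̄b are internally passive in T; indeed each can be exchanged with the smaller edge 00̄ to yield another spanning tree. -/

import Mathlib

/-!
Formalization scaffold for "h-vectors of graphic matroids of biconed graphs".

A graph `G` (loops and parallel edges allowed) with vertex set `A ∪ B` is
modelled by an abstract finite edge type `E` with an endpoint map
`ends : E → Sym2 (Fin m ⊕ₗ Fin n)`, where `A = Fin m = {1,…,m}`,
`Ā = B \ A = Fin n = {1̄,…,n̄}` and the finset `S ⊆ Fin m` records `A ∩ B`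
(so `B = S ∪ Ā`).  The biconing `G^{A,B}` adds the two vertices `0` and `0̄`
and the edges `00̄`, `0a (a ∈ A)` and `0̄b (b ∈ B)`.
-/

namespace BiconedPaper

noncomputable section
open scoped Classical

/-! ### Walks in multigraphs presented by an endpoint map -/

/-- A walk in the multigraph with edge set `ε` and endpoint map `ends`. -/
inductive MWalk {ε ν : Type} (ends : ε → Sym2 ν) : ν → ν → Type
  | nil (u : ν) : MWalk ends u u
  | cons {u w : ν} (e : ε) (v : ν) (h : ends e = s(u, v)) (p : MWalk ends v w) :
      MWalk ends u w

namespace MWalk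

variable {ε ν : Type} {ends : ε → Sym2 ν}

/-- The list of edges traversed by a walk. -/
def edges : ∀ {u v : ν}, MWalk ends u v → List ε
  | _, _, nil _ => []
  | _, _, cons e _ _ p => e :: p.edges

/-- The list of vertices visited by a walk. -/
def support : ∀ {u v : ν}, MWalk ends u v → List ν
  | u, _, nil _ => [u]
  | u, _, cons _ _ _ p => u :: p.support

/-- A walk is a path if it visits no vertex twice. -/
def IsPath {u v : ν} (p : MWalk ends u v) : Prop := p.support.Nodup

/-- All edges of the walk belong to the edge set `F`. -/
def edgesIn {u v : ν} (p : MWalk ends u v) (F : Finset ε) : Prop :=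
  ∀ e ∈ p.edges, e ∈ F

/-- The number of "bridging" edges traversed by a walk, i.e. steps whose two
endpoints lie on different sides according to `sideF`. -/
def bridgeCount (sideF : ν → Bool) : ∀ {u v : ν}, MWalk ends u v → ℕ
  | _, _, nil _ => 0
  | u, _, cons _ v' _ p => (if sideF u = sideF v' then 0 else 1) + p.bridgeCount sideF

end MWalk

/-- `u` and `v` are joined by a walk all of whose edges lie in `F`. -/
def Reachable {ε ν : Type} (ends : ε → Sym2 ν) (F : Finset ε) (u v : ν) : Prop :=
  ∃ p : MWalk ends u v, p.edgesIn F

/-- An edge set is acyclic (a forest) iff removing any one of its edges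
disconnects the endpoints of that edge.  (In particular no loops and no
parallel pairs.) -/
def IsAcyclic {ε ν : Type} [DecidableEq ε] (ends : ε → Sym2 ν) (F : Finset ε) : Prop :=
  ∀ e ∈ F, ∀ u v : ν, ends e = s(u, v) → ¬ Reachable ends (F.erase e) u v

/-- A spanning tree: an acyclic edge set connecting every pair of vertices. -/
def IsSpanningTree {ε ν : Type} [DecidableEq ε] (ends : ε → Sym2 ν) (T : Finset ε) : Prop :=
  IsAcyclic ends T ∧ ∀ u v : ν, Reachable ends T u v

/-! ### Biconed graphs -/

/-- The data of a biconed graph `G^{A,B}`:  the graph `G` has vertex set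
`A ∪ B` with `A = Fin m`, `Ā = B \ A = Fin n`, `A ∩ B = S`, and abstract
edge set `E` (so loops and parallel edges are allowed). -/
structure BiconedGraph where
  m : ℕ
  n : ℕ
  E : Type
  fintypeE : Fintype E
  decEqE : DecidableEq E
  ends : E → Sym2 (Fin m ⊕ₗ Fin n)
  S : Finset (Fin m)

namespace BiconedGraph

variable (P : BiconedGraph)

instance : Fintype P.E := P.fintypeE
instance : DecidableEq P.E := P.decEqE

/-- The vertices of `G`, linearly ordered `1 < ⋯ < m < 1̄ < ⋯ < n̄`. -/
abbrev VG := Fin P.m ⊕ₗ Fin P.n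

/-- The vertices of `G^{A,B}_red`:  `⊥` is the vertex `0̄`, ordered
`0̄ < 1 < ⋯ < m < 1̄ < ⋯ < n̄`. -/
abbrev Vred := WithBot P.VG

/-- The vertices of `G^{A,B}`: `⊥` is `0`, ordered `0 < 0̄ < 1 < ⋯ < n̄`. -/
abbrev W := WithBot P.Vred

/-- The vertex `a ∈ A`. -/
def aVert (a : Fin P.m) : P.VG := toLex (Sum.inl a)
/-- The vertex `b ∈ Ā`. -/
def bVert (b : Fin P.n) : P.VG := toLex (Sum.inr b)
/-- Inclusion of the vertices of `G` into those of `G^{A,B}_red`. -/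
def liftV (x : P.VG) : P.Vred := (x : WithBot P.VG)
/-- Inclusion of the vertices of `G^{A,B}_red` into those of `G^{A,B}`. -/
def liftW (x : P.Vred) : P.W := (x : WithBot P.Vred)

/-- The edges of the biconed graph `G^{A,B}`:  the edge `00̄`, the coning
edges `0a (a ∈ A)`, `0̄b (b ∈ Ā)`, `0̄a (a ∈ A ∩ B)`, and the edges of `G`. -/
abbrev EB := Unit ⊕ (Fin P.m ⊕ (Fin P.n ⊕ ({a : Fin P.m // a ∈ P.S} ⊕ P.E)))

/-- The edge `00̄`. -/
abbrev e00 : P.EB := Sum.inl ()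
/-- The coning edge `0a`, `a ∈ A`. -/
abbrev eA (a : Fin P.m) : P.EB := Sum.inr (Sum.inl a)
/-- The coning edge `0̄b`, `b ∈ Ā`. -/
abbrev eB (b : Fin P.n) : P.EB := Sum.inr (Sum.inr (Sum.inl b))
/-- The coning edge `0̄a`, `a ∈ A ∩ B`. -/
abbrev eS (a : {a : Fin P.m // a ∈ P.S}) : P.EB := Sum.inr (Sum.inr (Sum.inr (Sum.inl a)))
/-- An original edge of `G`. -/
abbrev eG (e : P.E) : P.EB := Sum.inr (Sum.inr (Sum.inr (Sum.inr e)))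

/-- The endpoint map of `G^{A,B}`. -/
def endsB : P.EB → Sym2 P.W
  | Sum.inl _ => s((⊥ : P.W), P.liftW ⊥)
  | Sum.inr (Sum.inl a) => s((⊥ : P.W), P.liftW (P.liftV (P.aVert a)))
  | Sum.inr (Sum.inr (Sum.inl b)) => s(P.liftW ⊥, P.liftW (P.liftV (P.bVert b)))
  | Sum.inr (Sum.inr (Sum.inr (Sum.inl a))) => s(P.liftW ⊥, P.liftW (P.liftV (P.aVert a.1)))
  | Sum.inr (Sum.inr (Sum.inr (Sum.inr e))) => (P.ends e).map fun x => P.liftW (P.liftV x)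

/-- The spanning tree `T₀`, consisting of `00̄`, the edges `0a (a ∈ A)` and
the edges `0̄b (b ∈ Ā)`. -/
def T0 : Finset P.EB :=
  Finset.univ.filter fun e => match e with
    | Sum.inl _ => True
    | Sum.inr (Sum.inl _) => True
    | Sum.inr (Sum.inr (Sum.inl _)) => True
    | _ => False

/-- The edges of `G^{A,B}_red` (delete the edges of `T₀` and the vertex `0`):
the edges `0̄a (a ∈ A ∩ B)` together with the edges of `G`. -/
abbrev Ered := {a : Fin P.m // a ∈ P.S} ⊕ P.E

/-- The endpoint map of `G^{A,B}_red`; `⊥` is the vertex `0̄`. -/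
def endsRed : P.Ered → Sym2 P.Vred
  | Sum.inl a => s((⊥ : P.Vred), P.liftV (P.aVert a.1))
  | Sum.inr e => (P.ends e).map P.liftV

/-- Inclusion of the edges of `G^{A,B}_red` into those of `G^{A,B}`. -/
def redToEB : P.Ered → P.EB
  | Sum.inl a => P.eS a
  | Sum.inr e => P.eG e

/-- The edge set `T \ T₀` of `T`, viewed inside `G^{A,B}_red`. -/
def redOf (T : Finset P.EB) : Finset P.Ered :=
  Finset.univ.filter fun e => P.redToEB e ∈ T

/-- `true` on the vertices of `A`, `false` on the vertices of `Ā ∪ {0̄}`. -/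
def side : P.Vred → Bool :=
  WithBot.recBotCoe false fun x => Sum.elim (fun _ => true) (fun _ => false) (ofLex x)

/-- The vertex lies in `A`. -/
def InA (v : P.Vred) : Prop := ∃ a : Fin P.m, v = P.liftV (P.aVert a)

/-- An edge of `G^{A,B}_red` is bridging if it joins a vertex of `A` to a
vertex of `Ā ∪ {0̄}`. -/
def BridgingE (e : P.Ered) : Prop :=
  ∃ u v : P.Vred, P.endsRed e = s(u, v) ∧ P.side u ≠ P.side v

/-! ### 2-edge-rooted forests -/

/-- The underlying edge set `F` of the multiset of edges given by the
multiplicity function `mult` (an edge `e` carries `mult e - 1` edge roots). -/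
def mSupport (mult : P.Ered → ℕ) : Finset P.Ered :=
  Finset.univ.filter fun e => mult e ≠ 0

/-- The degree of the multiset of edges given by `mult`. -/
def deg (mult : P.Ered → ℕ) : ℕ := ∑ e : P.Ered, mult e

/-- Edge `e` meets the connected component of `v` in the edge set `F`. -/
def Touches (F : Finset P.Ered) (v : P.Vred) (e : P.Ered) : Prop :=
  ∃ u : P.Vred, u ∈ P.endsRed e ∧ Reachable P.endsRed F v u

/-- The total number of edge roots in the component of `v`. -/
def compEdgeRoots (mult : P.Ered → ℕ) (v : P.Vred) : ℕ :=
  ∑ e ∈ P.mSupport mult, if P.Touches (P.mSupport mult) v e then mult e - 1 else 0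

/-- The component of `v` is `compCount`-edge-rooted:  the number of its edge
roots, plus `1` if it contains the vertex `0̄`. -/
def compCount (mult : P.Ered → ℕ) (v : P.Vred) : ℕ :=
  P.compEdgeRoots mult v +
    if Reachable P.endsRed (P.mSupport mult) v (⊥ : P.Vred) then 1 else 0

/-- Condition (C3) for the `2`-edge-rooted component of `v`:  the unique
shortest path containing both edge roots (resp. the vertex `0̄` and the edge
root, if the component contains `0̄`) has an odd number of bridging edges.
The shortest path containing two edges is the unique path whose first and
last edges are the two rooted edges; if the two edge roots lie on one common
edge (`mult e = 3`) the path is that single edge. -/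
def C3At (mult : P.Ered → ℕ) (v : P.Vred) : Prop :=
  (Reachable P.endsRed (P.mSupport mult) v (⊥ : P.Vred) →
    ∃ (x : P.Vred) (p : MWalk P.endsRed (⊥ : P.Vred) x),
      p.IsPath ∧ p.edgesIn (P.mSupport mult) ∧
      (∃ e, p.edges.getLast? = some e ∧ 2 ≤ mult e) ∧
      Odd (p.bridgeCount P.side)) ∧
  (¬ Reachable P.endsRed (P.mSupport mult) v (⊥ : P.Vred) →
    ∃ (x y : P.Vred) (p : MWalk P.endsRed x y),
      p.IsPath ∧ p.edgesIn (P.mSupport mult) ∧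
      Reachable P.endsRed (P.mSupport mult) v x ∧
      (∃ e, p.edges.head? = some e ∧ 2 ≤ mult e) ∧
      (∃ e, p.edges.getLast? = some e ∧ 2 ≤ mult e) ∧
      (∀ e, p.edges = [e] → mult e = 3) ∧
      Odd (p.bridgeCount P.side))

/-- `mult : Ered → ℕ` is (the multiplicity function of) a 2-edge-rooted
forest of `G^{A,B}_red`:
(C0) its support is a spanning forest;
(C1) at most one component is `2`-edge-rooted;
(C2) every other component is `0`- or `1`-edge-rooted;
(C3) the parity condition on the path joining the two roots. -/
def Is2ERF (mult : P.Ered → ℕ) : Prop :=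
  IsAcyclic P.endsRed (P.mSupport mult) ∧
  (∀ v : P.Vred, P.compCount mult v ≤ 2) ∧
  (∀ u v : P.Vred, P.compCount mult u = 2 → P.compCount mult v = 2 →
    Reachable P.endsRed (P.mSupport mult) u v) ∧
  (∀ v : P.Vred, P.compCount mult v = 2 → P.C3At mult v)

/-! ### Birooted forests -/

/-- `(F, R)` is a birooted forest of `G^{A,B}_red`:  `F` is a spanning forest,
the root set `R` contains `0̄`, every component of `F` contains at least one
root, no component contains three roots, at most one component contains two
roots, and a component with two roots has one root in `A` and the other in
`Ā ∪ {0̄}`. -/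
def IsBirootedForest (F : Finset P.Ered) (R : Set P.Vred) : Prop :=
  IsAcyclic P.endsRed F ∧
  (⊥ : P.Vred) ∈ R ∧
  (∀ v : P.Vred, ∃ r ∈ R, Reachable P.endsRed F v r) ∧
  (∀ r₁ ∈ R, ∀ r₂ ∈ R, ∀ r₃ ∈ R, r₁ ≠ r₂ → r₁ ≠ r₃ → r₂ ≠ r₃ →
    Reachable P.endsRed F r₁ r₂ → Reachable P.endsRed F r₁ r₃ → False) ∧
  (∀ r₁ ∈ R, ∀ r₂ ∈ R, ∀ r₃ ∈ R, ∀ r₄ ∈ R, r₁ ≠ r₂ → r₃ ≠ r₄ →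
    Reachable P.endsRed F r₁ r₂ → Reachable P.endsRed F r₃ r₄ →
    Reachable P.endsRed F r₁ r₃) ∧
  (∀ r₁ ∈ R, ∀ r₂ ∈ R, r₁ ≠ r₂ → Reachable P.endsRed F r₁ r₂ →
    (P.InA r₁ ∧ ¬ P.InA r₂) ∨ (P.InA r₂ ∧ ¬ P.InA r₁))

/-! ### Internal activity and the edge order -/

/-- `e` is internally passive in the spanning tree `T`:  it can be exchanged
for a strictly smaller edge `f` so that the result is again a spanning tree. -/
def InternallyPassive (ord : LinearOrder P.EB) (T : Finset P.EB) (e : P.EB) : Prop :=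
  e ∈ T ∧ ∃ f : P.EB, ord.lt f e ∧ IsSpanningTree P.endsB (insert f (T.erase e))

/-- `e` is internally active in the spanning tree `T`. -/
def InternallyActive (ord : LinearOrder P.EB) (T : Finset P.EB) (e : P.EB) : Prop :=
  e ∈ T ∧ ¬ ∃ f : P.EB, ord.lt f e ∧ IsSpanningTree P.endsB (insert f (T.erase e))

/-- The number of internally passive edges of `T`. -/
def ipCount (ord : LinearOrder P.EB) (T : Finset P.EB) : ℕ :=
  (T.filter fun e => P.InternallyPassive ord T e).card

/-- The smaller endpoint of an edge of `G^{A,B}`. -/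
def endMin (e : P.EB) : P.W := Sym2.lift ⟨fun a b => a ⊓ b, fun a b => inf_comm a b⟩ (P.endsB e)
/-- The larger endpoint of an edge of `G^{A,B}`. -/
def endMax (e : P.EB) : P.W := Sym2.lift ⟨fun a b => a ⊔ b, fun a b => sup_comm a b⟩ (P.endsB e)

/-- The endpoints of an edge, as an ordered pair in the lexicographic square
of the vertex order `0 < 0̄ < 1 < ⋯ < m < 1̄ < ⋯ < n̄`. -/
def lexEnds (e : P.EB) : P.W ×ₗ P.W := toLex (P.endMin e, P.endMax e)

/-- A linear order on the edges of `G^{A,B}` is admissible if it refines the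
lexicographic order on endpoints (so parallel edges are ordered arbitrarily). -/
def AdmissibleOrder (ord : LinearOrder P.EB) : Prop :=
  ∀ e f : P.EB, P.lexEnds e < P.lexEnds f → ord.lt e f

/-- `v` is a connecting vertex of `T`:  `v ∈ A` and `v` is adjacent to `0` in
`T`, or `v ∈ Ā` and `v` is adjacent to `0̄` in `T`. -/
def ConnVertex (T : Finset P.EB) (v : P.Vred) : Prop :=
  (∃ a : Fin P.m, v = P.liftV (P.aVert a) ∧ P.eA a ∈ T) ∨
  (∃ b : Fin P.n, v = P.liftV (P.bVert b) ∧ P.eB b ∈ T)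

/-- `e` is a connecting edge of `T` (an edge `0a`, `a ∈ A`, or `0̄b`, `b ∈ Ā`)
with connecting vertex `v`. -/
def ConnEdge (T : Finset P.EB) (e : P.EB) (v : P.Vred) : Prop :=
  e ∈ T ∧ ((∃ a : Fin P.m, e = P.eA a ∧ v = P.liftV (P.aVert a)) ∨
           (∃ b : Fin P.n, e = P.eB b ∧ v = P.liftV (P.bVert b)))

/-! ### The h-vector -/

/-- `f_{i-1}`:  the number of acyclic edge sets of cardinality `i` in `G^{A,B}`. -/
def numAcyclic (i : ℕ) : ℕ :=
  Nat.card {F : Finset P.EB // IsAcyclic P.endsB F ∧ F.card = i}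

/-- The rank of the graphic matroid of `G^{A,B}`:  `|V| - 1 = m + n + 1`. -/
def d : ℕ := P.m + P.n + 1

/-- `h` is the h-vector of the graphic matroid of `G^{A,B}`:  it satisfies
`Σ_{i=0}^{d} f_{i-1} (t-1)^{d-i} = Σ_{k=0}^{d} h_k t^{d-k}`. -/
def IsHVector (h : ℕ → ℤ) : Prop :=
  ∑ i ∈ Finset.range (P.d + 1),
      Polynomial.C ((P.numAcyclic i : ℤ)) * (Polynomial.X - 1) ^ (P.d - i)
    = ∑ k ∈ Finset.range (P.d + 1), Polynomial.C (h k) * Polynomial.X ^ (P.d - k)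

end BiconedGraph


/-! ### Auxiliary graph lemmas for Statement 11 -/

section AuxGraph

variable {ε ν : Type} {ends : ε → Sym2 ν}

namespace MWalk

/-- Concatenation of walks. -/
def append : ∀ {u v w : ν}, MWalk ends u v → MWalk ends v w → MWalk ends u w
  | _, _, _, nil _, q => q
  | _, _, _, cons e v h p, q => cons e v h (p.append q)

lemma edges_append {u v w : ν} (p : MWalk ends u v) (q : MWalk ends v w) :
    (p.append q).edges = p.edges ++ q.edges := by
  induction p with
  | nil u => rfl
  | cons e v h p ih => simp [append, edges, ih]

lemma edgesIn_append {u v w : ν} {p : MWalk ends u v} {q : MWalk ends v w} {F : Finset ε}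
    (hp : p.edgesIn F) (hq : q.edgesIn F) : (p.append q).edgesIn F := by
  intro e he
  rw [edges_append, List.mem_append] at he
  rcases he with h | h
  · exact hp e h
  · exact hq e h

end MWalk

lemma Reachable.refl (F : Finset ε) (u : ν) : Reachable ends F u u :=
  ⟨MWalk.nil u, fun e he => by simp [MWalk.edges] at he⟩

lemma Reachable.trans {F : Finset ε} {u v w : ν}
    (h1 : Reachable ends F u v) (h2 : Reachable ends F v w) : Reachable ends F u w := by
  obtain ⟨p, hp⟩ := h1
  obtain ⟨q, hq⟩ := h2
  exact ⟨p.append q, MWalk.edgesIn_append hp hq⟩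

lemma reachable_step {F : Finset ε} {e : ε} {u v : ν} (he : e ∈ F) (h : ends e = s(u, v)) :
    Reachable ends F u v :=
  ⟨MWalk.cons e v h (MWalk.nil v), by
    intro e' he'
    simp only [MWalk.edges, List.mem_singleton] at he'
    exact he' ▸ he⟩

lemma Reachable.symm {F : Finset ε} {u v : ν} (h : Reachable ends F u v) :
    Reachable ends F v u := by
  obtain ⟨p, hp⟩ := h
  induction p with
  | nil u => exact Reachable.refl F u
  | cons e v h p ih =>
      exact (ih fun x hx => hp x (List.mem_cons_of_mem _ hx)).trans
        (reachable_step (hp e (List.mem_cons_self)) (h.trans (Sym2.eq_swap)))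

lemma Reachable.mono {F F' : Finset ε} (hFF : F ⊆ F') {u v : ν}
    (h : Reachable ends F u v) : Reachable ends F' u v := by
  obtain ⟨p, hp⟩ := h
  exact ⟨p, fun e he => hFF (hp e he)⟩

/-- Decomposition of reachability after inserting an edge `f` with endpoints
`x, y`. -/
lemma reachable_insert_elim [DecidableEq ε] {F : Finset ε} {f : ε} {x y : ν}
    (hf : ends f = s(x, y)) {p q : ν} (h : Reachable ends (insert f F) p q) :
    Reachable ends F p q ∨
      ((Reachable ends F p x ∨ Reachable ends F p y) ∧
       (Reachable ends F q x ∨ Reachable ends F q y)) := by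
  obtain ⟨w, hw⟩ := h
  induction w with
  | nil u => exact Or.inl (Reachable.refl F u)
  | cons e v h w ih =>
      have hwin : w.edgesIn (insert f F) := fun x hx => hw x (List.mem_cons_of_mem _ hx)
      have hein : e ∈ insert f F := hw e (List.mem_cons_self)
      by_cases hef : e = f
      · subst hef
        rcases Sym2.eq_iff.mp (hf.symm.trans h) with ⟨hx1, hy1⟩ | ⟨hx1, hy1⟩
        · subst hx1; subst hy1
          refine Or.inr ⟨Or.inl (Reachable.refl F _), ?_⟩
          rcases ih hwin with h1 | ⟨_, h2⟩
          · exact Or.inr h1.symm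
          · exact h2
        · subst hx1; subst hy1
          refine Or.inr ⟨Or.inr (Reachable.refl F _), ?_⟩
          rcases ih hwin with h1 | ⟨_, h2⟩
          · exact Or.inl h1.symm
          · exact h2
      · have heF : e ∈ F := by
          rcases Finset.mem_insert.mp hein with h' | h'
          · exact absurd h' hef
          · exact h'
        have hstep : Reachable ends F _ v := reachable_step heF h
        rcases ih hwin with h1 | ⟨h2, h3⟩
        · exact Or.inl (hstep.trans h1)
        · refine Or.inr ⟨?_, h3⟩
          rcases h2 with h' | h'
          · exact Or.inl (hstep.trans h')
          · exact Or.inr (hstep.trans h')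

/-- The fundamental exchange property of spanning trees. -/
theorem swap_spanning_tree [DecidableEq ε] {T : Finset ε} (hT : IsSpanningTree ends T)
    {e f : ε} {u v x y : ν} (he : e ∈ T) (hf : f ∉ T)
    (heuv : ends e = s(u, v)) (hfxy : ends f = s(x, y))
    (hux : Reachable ends (T.erase e) u x) (hvy : Reachable ends (T.erase e) v y) :
    IsSpanningTree ends (insert f (T.erase e)) := by
  have hsub : T.erase e ⊆ insert f (T.erase e) := Finset.subset_insert _ _
  have hfT' : f ∈ insert f (T.erase e) := Finset.mem_insert_self _ _
  have huv : ¬ Reachable ends (T.erase e) u v := hT.1 e he u v heuv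
  have hnCy : ¬ Reachable ends (T.erase e) u y := fun h => huv (h.trans hvy.symm)
  -- connectivity
  have hTuv : Reachable ends (insert f (T.erase e)) u v :=
    ((hux.mono hsub).trans (reachable_step hfT' hfxy)).trans (hvy.mono hsub).symm
  have hedge : ∀ g ∈ T, ∀ p q : ν, ends g = s(p, q) →
      Reachable ends (insert f (T.erase e)) p q := by
    intro g hg p q hgpq
    by_cases hge : g = e
    · subst hge
      rcases Sym2.eq_iff.mp (heuv.symm.trans hgpq) with ⟨h1, h2⟩ | ⟨h1, h2⟩
      · subst h1; subst h2; exact hTuv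
      · subst h1; subst h2; exact hTuv.symm
    · exact reachable_step (hsub (Finset.mem_erase.mpr ⟨hge, hg⟩)) hgpq
  have hconn : ∀ p q : ν, Reachable ends (insert f (T.erase e)) p q := by
    intro p q
    obtain ⟨w, hw⟩ := hT.2 p q
    induction w with
    | nil u => exact Reachable.refl _ u
    | cons g v h w ih =>
        exact (hedge g (hw g (List.mem_cons_self)) _ v h).trans
          (ih fun x hx => hw x (List.mem_cons_of_mem _ hx))
  refine ⟨?_, hconn⟩
  intro g hg p q hgpq hreach
  by_cases hgf : g = f
  · subst hgf
    have hfe : g ∉ T.erase e := fun h => hf (Finset.mem_of_mem_erase h)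
    rw [Finset.erase_insert hfe] at hreach
    rcases Sym2.eq_iff.mp (hgpq.symm.trans hfxy) with ⟨h1, h2⟩ | ⟨h1, h2⟩
    · subst h1; subst h2; exact huv ((hux.trans hreach).trans hvy.symm)
    · subst h1; subst h2; exact huv ((hux.trans hreach.symm).trans hvy.symm)
  · have hgTe : g ∈ T.erase e := by
      rcases Finset.mem_insert.mp hg with h' | h'
      · exact absurd h' hgf
      · exact h'
    have hgT : g ∈ T := Finset.mem_of_mem_erase hgTe
    have hne : ¬ Reachable ends (T.erase g) p q := hT.1 g hgT p q hgpq
    have hset : (insert f (T.erase e)).erase g = insert f ((T.erase e).erase g) := by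
      ext z
      simp only [Finset.mem_erase, Finset.mem_insert]
      constructor
      · rintro ⟨hz, hz' | hz'⟩
        · exact Or.inl hz'
        · exact Or.inr ⟨hz, hz'⟩
      · rintro (hz | ⟨hz, hz'⟩)
        · exact ⟨fun hh => hgf (hh.symm.trans hz), Or.inl hz⟩
        · exact ⟨hz, Or.inr hz'⟩
    rw [hset] at hreach
    have hsub2 : (T.erase e).erase g ⊆ T.erase e := Finset.erase_subset _ _
    have hsub3 : (T.erase e).erase g ⊆ T.erase g :=
      Finset.erase_subset_erase _ (Finset.erase_subset _ _)
    rcases reachable_insert_elim hfxy hreach with h1 | ⟨h2, h3⟩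
    · exact hne (h1.mono hsub3)
    · -- cut argument
      have hCx : Reachable ends (T.erase e) u x := hux
      have hpq : Reachable ends (T.erase e) p q := reachable_step hgTe hgpq
      by_cases hcp : Reachable ends (T.erase e) u p
      · have hpx : Reachable ends ((T.erase e).erase g) p x := by
          rcases h2 with h' | h'
          · exact h'
          · exact absurd ((hcp.trans (h'.mono hsub2))) hnCy
        have hqx : Reachable ends ((T.erase e).erase g) q x := by
          rcases h3 with h' | h'
          · exact h'
          · exact absurd (((hcp.trans hpq).trans (h'.mono hsub2))) hnCy
        exact hne ((hpx.trans hqx.symm).mono hsub3)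
      · have hpy : Reachable ends ((T.erase e).erase g) p y := by
          rcases h2 with h' | h'
          · exact absurd (hCx.trans (h'.mono hsub2).symm) hcp
          · exact h'
        have hqy : Reachable ends ((T.erase e).erase g) q y := by
          rcases h3 with h' | h'
          · exact absurd ((hCx.trans (h'.mono hsub2).symm).trans hpq.symm) hcp
          · exact h'
        exact hne ((hpy.trans hqy.symm).mono hsub3)

/-- Mapping walks along a graph homomorphism. -/
lemma reachable_map {ε' ν' : Type} {ends' : ε' → Sym2 ν'}
    (g : ν → ν') (φ : ε → ε') {F : Finset ε} {F' : Finset ε'}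
    (hφ : ∀ e ∈ F, φ e ∈ F' ∧ ends' (φ e) = (ends e).map g)
    {u v : ν} (h : Reachable ends F u v) : Reachable ends' F' (g u) (g v) := by
  obtain ⟨w, hw⟩ := h
  induction w with
  | nil u => exact Reachable.refl F' (g u)
  | cons e v h w ih =>
      have he : e ∈ F := hw e (List.mem_cons_self)
      have hstep : Reachable ends' F' (g _) (g v) :=
        reachable_step (hφ e he).1 (by rw [(hφ e he).2, h, Sym2.map_pair_eq])
      exact hstep.trans (ih fun x hx => hw x (List.mem_cons_of_mem _ hx))

end AuxGraph

/-- `(h 0, …, h d)` is a pure O-sequence:  there is a multicomplex `M` of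
multisets on a finite ground set (nonempty, closed under sub-multisets), all
of whose inclusion-maximal members have the same cardinality, whose members
all have cardinality at most `d`, and which has exactly `h i` members of
cardinality `i` for every `i ≤ d`. -/
def IsPureOSeq (d : ℕ) (h : ℕ → ℤ) : Prop :=
  ∃ (N : ℕ) (M : Set (Multiset (Fin N))),
    M.Nonempty ∧
    (∀ s ∈ M, ∀ t : Multiset (Fin N), t ≤ s → t ∈ M) ∧
    (∀ s ∈ M, ∀ t ∈ M, (∀ u ∈ M, s ≤ u → u = s) → (∀ u ∈ M, t ≤ u → u = t) →
      Multiset.card s = Multiset.card t) ∧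
    (∀ s ∈ M, Multiset.card s ≤ d) ∧
    (∀ i ≤ d, (Nat.card {s : Multiset (Fin N) // s ∈ M ∧ Multiset.card s = i} : ℤ) = h i)


/-- Let `T` be a spanning tree of `G^{A,B}` not containing
the edge `00̄`.  If some component of `T \\ T₀` contains two connecting
vertices `a ∈ A` and `b ∈ Ā`, then both connecting edges `0a` and `0̄b` are
internally passive in `T`; indeed each can be exchanged with the smaller edge
`00̄` to yield another spanning tree. -/
theorem birooted_component_edges_passive (P : BiconedGraph)
    (ord : LinearOrder P.EB) (hord : P.AdmissibleOrder ord)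
    (T : Finset P.EB) (hT : IsSpanningTree P.endsB T) (h00 : P.e00 ∉ T)
    (a : Fin P.m) (b : Fin P.n) (ha : P.eA a ∈ T) (hb : P.eB b ∈ T)
    (hsame : Reachable P.endsRed (P.redOf T)
      (P.liftV (P.aVert a)) (P.liftV (P.bVert b))) :
    (P.InternallyPassive ord T (P.eA a) ∧ P.InternallyPassive ord T (P.eB b)) ∧
    ord.lt P.e00 (P.eA a) ∧ ord.lt P.e00 (P.eB b) ∧
    IsSpanningTree P.endsB (insert P.e00 (T.erase (P.eA a))) ∧
    IsSpanningTree P.endsB (insert P.e00 (T.erase (P.eB b))) := by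
  classical
  have hneA : ∀ er : P.Ered, P.redToEB er ≠ P.eA a := by
    rintro (s | e') h <;> simp [BiconedGraph.redToEB] at h
  have hneB : ∀ er : P.Ered, P.redToEB er ≠ P.eB b := by
    rintro (s | e') h <;> simp [BiconedGraph.redToEB] at h
  have hends : ∀ er : P.Ered, P.endsB (P.redToEB er) = (P.endsRed er).map P.liftW := by
    rintro (s | e') <;>
      simp [BiconedGraph.redToEB, BiconedGraph.endsB, BiconedGraph.endsRed,
        Sym2.map_pair_eq, Sym2.map_map, Function.comp]
  have hlift : ∀ (c : P.EB), (∀ er, P.redToEB er ≠ c) → ∀ {u v : P.Vred},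
      Reachable P.endsRed (P.redOf T) u v →
      Reachable P.endsB (T.erase c) (P.liftW u) (P.liftW v) := by
    intro c hc u v h
    refine reachable_map P.liftW P.redToEB (fun er her => ⟨?_, hends er⟩) h
    exact Finset.mem_erase.mpr ⟨hc er, (Finset.mem_filter.mp her).2⟩
  have hendsA : P.endsB (P.eA a) = s((⊥ : P.W), P.liftW (P.liftV (P.aVert a))) := rfl
  have hendsBb : P.endsB (P.eB b) = s(P.liftW ⊥, P.liftW (P.liftV (P.bVert b))) := rfl
  have hends00 : P.endsB P.e00 = s((⊥ : P.W), P.liftW ⊥) := rfl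
  have hmemBA : P.eB b ∈ T.erase (P.eA a) := Finset.mem_erase.mpr ⟨by simp, hb⟩
  have hmemAB : P.eA a ∈ T.erase (P.eB b) := Finset.mem_erase.mpr ⟨by simp, ha⟩
  have hvyA : Reachable P.endsB (T.erase (P.eA a))
      (P.liftW (P.liftV (P.aVert a))) (P.liftW ⊥) :=
    (hlift _ hneA hsame).trans (reachable_step hmemBA hendsBb).symm
  have hvyB : Reachable P.endsB (T.erase (P.eB b))
      (P.liftW (P.liftV (P.bVert b))) (⊥ : P.W) :=
    (hlift _ hneB hsame).symm.trans (reachable_step hmemAB hendsA).symm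
  have hA : IsSpanningTree P.endsB (insert P.e00 (T.erase (P.eA a))) :=
    swap_spanning_tree hT ha h00 hendsA hends00 (Reachable.refl _ _) hvyA
  have hB : IsSpanningTree P.endsB (insert P.e00 (T.erase (P.eB b))) :=
    swap_spanning_tree hT hb h00 hendsBb (hends00.trans Sym2.eq_swap)
      (Reachable.refl _ _) hvyB
  have hminA : P.endMin (P.eA a) = (⊥ : P.W) := by
    simp [BiconedGraph.endMin, hendsA]
  have hmaxA : P.endMax (P.eA a) = P.liftW (P.liftV (P.aVert a)) := by
    simp [BiconedGraph.endMax, hendsA]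
  have hmin0 : P.endMin P.e00 = (⊥ : P.W) := by
    simp [BiconedGraph.endMin, hends00]
  have hmax0 : P.endMax P.e00 = P.liftW ⊥ := by
    simp [BiconedGraph.endMax, hends00]
  have hle : (P.liftW ⊥ : P.W) ≤ P.liftW (P.liftV (P.bVert b)) :=
    WithBot.coe_le_coe.mpr bot_le
  have hminB : P.endMin (P.eB b) = P.liftW ⊥ := by
    simp only [BiconedGraph.endMin, hendsBb, Sym2.lift_mk]
    exact inf_eq_left.mpr hle
  have hlt1 : ord.lt P.e00 (P.eA a) := by
    apply hord
    show toLex (P.endMin P.e00, P.endMax P.e00) < toLex (P.endMin (P.eA a), P.endMax (P.eA a))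
    rw [hmin0, hmax0, hminA, hmaxA, Prod.Lex.lt_iff]
    exact Or.inr ⟨rfl, WithBot.coe_lt_coe.mpr (WithBot.bot_lt_coe _)⟩
  have hlt2 : ord.lt P.e00 (P.eB b) := by
    apply hord
    show toLex (P.endMin P.e00, P.endMax P.e00) < toLex (P.endMin (P.eB b), P.endMax (P.eB b))
    rw [hmin0, hminB, Prod.Lex.lt_iff]
    exact Or.inl (WithBot.bot_lt_coe _)
  exact ⟨⟨⟨ha, P.e00, hlt1, hA⟩, ⟨hb, P.e00, hlt2, hB⟩⟩, hlt1, hlt2, hA, hB⟩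

end

end BiconedPaper
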